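/- Let u_n denote the number of uniquely closable Motzkin trees with exactly n nodes, and let b_n denote the number of Motzkin trees with exactly n nodes containing no unary node l. Then u_0 = 0, u_1 = 0, and for every n ≥ 2, u_n = b_{n-1} + Σ_{i+j=n-1, i≥1, j≥1} u_i · u_j; moreover b_1 = 1, b_0 = 0, and for every n ≥ 2, b_n = Σ_{i+j=n-1, i≥1, j≥1} b_i · b_j. -/

import Mathlib

/-- Motzkin trees (binary-unary trees): leaf `v`, unary `l`, binary `a`. -/
inductive Mot : Type
  | v : Mot
  | l : Mot → Mot
  | a : Mot → Mot → Mot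
deriving DecidableEq

/-- Lambda terms in de Bruijn form. -/
inductive Lam : Type
  | v : Nat → Lam
  | l : Lam → Lam
  | a : Lam → Lam → Lam
deriving DecidableEq

/-- `t` is closed at depth `d`. -/
def Lam.closedAt : Lam → Nat → Prop
  | .v i, d => i < d
  | .l t, d => t.closedAt (d + 1)
  | .a s t, d => s.closedAt d ∧ t.closedAt d

/-- The Motzkin-tree skeleton of a de Bruijn term. -/
def Lam.skel : Lam → Mot
  | .v _ => .v
  | .l t => .l t.skel
  | .a s t => .a s.skel t.skel

/-- Total node count of a Motzkin tree. -/
def Mot.nodes : Mot → ℕ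
  | .v => 1
  | .l t => 1 + t.nodes
  | .a s t => 1 + s.nodes + t.nodes

/-- A Motzkin tree is uniquely closable if exactly one closed term has it as skeleton. -/
def Mot.UniquelyClosable (X : Mot) : Prop := ∃! t : Lam, t.closedAt 0 ∧ t.skel = X

/-- A Motzkin tree contains no unary node `l`. -/
def Mot.LFree : Mot → Prop
  | .v => True
  | .l _ => False
  | .a s t => s.LFree ∧ t.LFree

/-- `u n` is the number of uniquely closable Motzkin trees with exactly `n` nodes. -/
noncomputable def u (n : ℕ) : ℕ := Nat.card {t : Mot // t.nodes = n ∧ t.UniquelyClosable}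

/-- `b n` is the number of `l`-free Motzkin trees with exactly `n` nodes. -/
noncomputable def b (n : ℕ) : ℕ := Nat.card {t : Mot // t.nodes = n ∧ t.LFree}

/-- fill all leaves with de Bruijn index `k`. -/
def Mot.fill (k : ℕ) : Mot → Lam
  | .v => .v k
  | .l t => .l (t.fill k)
  | .a s t => .a (s.fill k) (t.fill k)

lemma Mot.skel_fill (k : ℕ) (X : Mot) : (X.fill k).skel = X := by
  induction X <;> simp [Mot.fill, Lam.skel, *]

lemma Mot.closedAt_fill (k : ℕ) (X : Mot) : ∀ d, k < d → (X.fill k).closedAt d := by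
  induction X with
  | v => intro d hd; simpa [Mot.fill, Lam.closedAt]
  | l t ih => intro d hd; exact ih (d+1) (by omega)
  | a s t ihs iht => exact fun d hd => ⟨ihs d hd, iht d hd⟩

lemma Mot.fill_ne (X : Mot) : X.fill 0 ≠ X.fill 1 := by
  induction X with
  | v => simp [Mot.fill]
  | l t ih => simpa [Mot.fill] using ih
  | a s t ihs iht => simp [Mot.fill]; intro h; exact absurd h ihs

lemma Mot.lfree_unique (X : Mot) (hX : X.LFree) :
    ∀ t : Lam, t.closedAt 1 → t.skel = X → t = X.fill 0 := by
  induction X with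
  | v =>
    intro t hc hs
    cases t with
    | v i => simp [Lam.closedAt] at hc; simp [Mot.fill]; omega
    | l t => simp [Lam.skel] at hs
    | a s t => simp [Lam.skel] at hs
  | l Y ih => exact absurd hX (by simp [Mot.LFree])
  | a S T ihs iht =>
    intro t hc hs
    cases t with
    | v i => simp [Lam.skel] at hs
    | l t => simp [Lam.skel] at hs
    | a p q =>
      simp [Lam.skel] at hs
      obtain ⟨h1, h2⟩ := hs
      obtain ⟨c1, c2⟩ := hc
      simp [Mot.fill]
      exact ⟨ihs hX.1 p c1 h1, iht hX.2 q c2 h2⟩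

lemma Mot.two_if_not_lfree (X : Mot) (hX : ¬ X.LFree) (d : ℕ) (hd : 1 ≤ d) :
    ∃ t s : Lam, t ≠ s ∧ t.closedAt d ∧ t.skel = X ∧ s.closedAt d ∧ s.skel = X := by
  induction X generalizing d with
  | v => exact absurd trivial hX
  | l Y ih =>
    refine ⟨.l (Y.fill 0), .l (Y.fill 1), ?_, ?_, ?_, ?_, ?_⟩
    · simpa using Y.fill_ne
    · exact Y.closedAt_fill 0 (d+1) (by omega)
    · simp [Lam.skel, Y.skel_fill]
    · exact Y.closedAt_fill 1 (d+1) (by omega)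
    · simp [Lam.skel, Y.skel_fill]
  | a S T ihs iht =>
    simp [Mot.LFree] at hX
    by_cases hS : S.LFree
    · obtain ⟨t, s, hne, hc1, hs1, hc2, hs2⟩ := iht (hX hS) d hd
      refine ⟨.a (S.fill 0) t, .a (S.fill 0) s, by simpa using hne,
        ⟨S.closedAt_fill 0 d (by omega), hc1⟩, by simp [Lam.skel, S.skel_fill, hs1],
        ⟨S.closedAt_fill 0 d (by omega), hc2⟩, by simp [Lam.skel, S.skel_fill, hs2]⟩
    · obtain ⟨t, s, hne, hc1, hs1, hc2, hs2⟩ := ihs hS d hd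
      refine ⟨.a t (T.fill 0), .a s (T.fill 0), by simpa using hne,
        ⟨hc1, T.closedAt_fill 0 d (by omega)⟩, by simp [Lam.skel, T.skel_fill, hs1],
        ⟨hc2, T.closedAt_fill 0 d (by omega)⟩, by simp [Lam.skel, T.skel_fill, hs2]⟩

lemma Mot.not_uc_v : ¬ Mot.UniquelyClosable .v := by
  rintro ⟨t, ⟨hc, hs⟩, -⟩
  cases t with
  | v i => simp [Lam.closedAt] at hc
  | l t => simp [Lam.skel] at hs
  | a s t => simp [Lam.skel] at hs

lemma Mot.uc_l_iff (Y : Mot) : Mot.UniquelyClosable (.l Y) ↔ Y.LFree := by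
  constructor
  · intro h
    by_contra hY
    obtain ⟨t, s, hne, hc1, hs1, hc2, hs2⟩ := Y.two_if_not_lfree hY 1 le_rfl
    obtain ⟨w, -, hw⟩ := h
    have h1 := hw (.l t) ⟨hc1, by simp [Lam.skel, hs1]⟩
    have h2 := hw (.l s) ⟨hc2, by simp [Lam.skel, hs2]⟩
    rw [← h2] at h1; exact hne ((Lam.l.injEq _ _).mp h1)
  · intro hY
    refine ⟨.l (Y.fill 0), ⟨Y.closedAt_fill 0 1 one_pos, by simp [Lam.skel, Y.skel_fill]⟩, ?_⟩
    rintro t ⟨hc, hs⟩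
    cases t with
    | v i => simp [Lam.skel] at hs
    | l t =>
      simp [Lam.skel] at hs
      have := Y.lfree_unique hY t hc hs
      rw [this]
    | a s t => simp [Lam.skel] at hs

lemma Mot.uc_a_iff (S T : Mot) :
    Mot.UniquelyClosable (.a S T) ↔ S.UniquelyClosable ∧ T.UniquelyClosable := by
  constructor
  · rintro ⟨w, ⟨hc, hs⟩, hw⟩
    cases w with
    | v i => simp [Lam.skel] at hs
    | l t => simp [Lam.skel] at hs
    | a p q =>
      simp [Lam.skel] at hs
      obtain ⟨h1, h2⟩ := hs
      obtain ⟨c1, c2⟩ := hc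
      constructor
      · refine ⟨p, ⟨c1, h1⟩, ?_⟩
        rintro p' ⟨hc', hs'⟩
        have := hw (.a p' q) ⟨⟨hc', c2⟩, by simp [Lam.skel, hs', h2]⟩
        exact (Lam.a.injEq _ _ _ _).mp this |>.1
      · refine ⟨q, ⟨c2, h2⟩, ?_⟩
        rintro q' ⟨hc', hs'⟩
        have := hw (.a p q') ⟨⟨c1, hc'⟩, by simp [Lam.skel, hs', h1]⟩
        exact (Lam.a.injEq _ _ _ _).mp this |>.2
  · rintro ⟨⟨p, ⟨c1, h1⟩, hp⟩, ⟨q, ⟨c2, h2⟩, hq⟩⟩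
    refine ⟨.a p q, ⟨⟨c1, c2⟩, by simp [Lam.skel, h1, h2]⟩, ?_⟩
    rintro t ⟨hc, hs⟩
    cases t with
    | v i => simp [Lam.skel] at hs
    | l t => simp [Lam.skel] at hs
    | a p' q' =>
      simp [Lam.skel] at hs
      rw [hp p' ⟨hc.1, hs.1⟩, hq q' ⟨hc.2, hs.2⟩]
open scoped Classical in
noncomputable def motsOf : ℕ → Finset Mot
  | 0 => ∅
  | n + 1 =>
    (if n = 0 then {Mot.v} else ∅) ∪ (motsOf n).image Mot.l ∪
      (Finset.range (n + 1)).biUnion fun i =>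
        ((motsOf (min i n)) ×ˢ (motsOf (n - i))).image fun q => Mot.a q.1 q.2
  decreasing_by all_goals omega

lemma mem_motsOf (t : Mot) : ∀ n, t ∈ motsOf n ↔ t.nodes = n := by
  induction t with
  | v =>
    intro n
    match n with
    | 0 => simp [motsOf, Mot.nodes]
    | n + 1 =>
      simp only [motsOf, Finset.mem_union, Finset.mem_image, Finset.mem_biUnion,
        Finset.mem_product, Finset.mem_range, Mot.nodes]
      constructor
      · rintro ((h | ⟨x, -, h⟩) | ⟨i, -, ⟨x, y⟩, -, h⟩)
        · split_ifs at h with h0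
          · simp at h; omega
          · simp at h
        · simp at h
        · simp at h
      · intro h
        have : n = 0 := by omega
        subst this
        exact Or.inl (Or.inl (by simp))
  | l t ih =>
    intro n
    match n with
    | 0 => simp [motsOf, Mot.nodes]
    | n + 1 =>
      simp only [motsOf, Finset.mem_union, Finset.mem_image, Finset.mem_biUnion,
        Finset.mem_product, Finset.mem_range, Mot.nodes]
      constructor
      · rintro ((h | ⟨x, hx, h⟩) | ⟨i, -, ⟨x, y⟩, -, h⟩)
        · split_ifs at h <;> simp at h
        · simp at h; subst h; rw [ih n] at hx; omega
        · simp at h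
      · intro h
        exact Or.inl (Or.inr ⟨t, (ih n).mpr (by omega), rfl⟩)
  | a s t ihs iht =>
    intro n
    match n with
    | 0 => simp [motsOf, Mot.nodes]
    | n + 1 =>
      simp only [motsOf, Finset.mem_union, Finset.mem_image, Finset.mem_biUnion,
        Finset.mem_product, Finset.mem_range, Mot.nodes]
      constructor
      · rintro ((h | ⟨x, hx, h⟩) | ⟨i, hi, ⟨x, y⟩, ⟨hx, hy⟩, h⟩)
        · split_ifs at h <;> simp at h
        · simp at h
        · simp at h
          obtain ⟨rfl, rfl⟩ := h
          rw [ihs] at hx; rw [iht] at hy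
          omega
      · intro h
        have hsn : s.nodes ≤ n := by omega
        refine Or.inr ⟨s.nodes, by omega, ⟨s, t⟩,
          ⟨(ihs _).mpr (by omega), (iht _).mpr (by omega)⟩, rfl⟩

lemma Mot.nodes_pos (t : Mot) : 1 ≤ t.nodes := by
  have : ∀ s : Mot, 1 ≤ s.nodes ∨ True := fun _ => Or.inr trivial
  cases t <;> simp [Mot.nodes]
  omega
open scoped Classical

lemma u_eq (n : ℕ) : u n = ((motsOf n).filter Mot.UniquelyClosable).card := by
  rw [u, ← Nat.card_eq_finsetCard]
  exact Nat.card_congr (Equiv.subtypeEquivRight (fun t => by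
    simp [Finset.mem_filter, mem_motsOf]))

lemma b_eq (n : ℕ) : b n = ((motsOf n).filter Mot.LFree).card := by
  rw [b, ← Nat.card_eq_finsetCard]
  exact Nat.card_congr (Equiv.subtypeEquivRight (fun t => by
    simp [Finset.mem_filter, mem_motsOf]))

lemma motsOf_zero : motsOf 0 = ∅ := by simp [motsOf]

lemma motsOf_one : motsOf 1 = {Mot.v} := by
  ext t
  rw [mem_motsOf]
  cases t with
  | v => simp [Mot.nodes]
  | l t => have := t.nodes_pos; simp [Mot.nodes]; omega
  | a s t => have := s.nodes_pos; have := t.nodes_pos; simp [Mot.nodes]; omega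

lemma u_zero : u 0 = 0 := by rw [u_eq, motsOf_zero]; simp

lemma b_zero : b 0 = 0 := by rw [b_eq, motsOf_zero]; simp

lemma u_one : u 1 = 0 := by
  rw [u_eq, motsOf_one, Finset.filter_singleton, if_neg Mot.not_uc_v]; simp

lemma b_one : b 1 = 1 := by
  rw [b_eq, motsOf_one, Finset.filter_singleton]; simp [Mot.LFree]

lemma a_inj : Function.Injective (fun q : Mot × Mot => Mot.a q.1 q.2) := by
  rintro ⟨a, b⟩ ⟨c, d⟩ h
  simpa [Prod.ext_iff] using h

lemma l_inj : Function.Injective Mot.l := by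
  intro a b h; simpa using h

lemma motsOf_step (m : ℕ) :
    motsOf (m + 2) = (motsOf (m + 1)).image Mot.l ∪
      (Finset.range (m + 2)).biUnion fun i =>
        ((motsOf (min i (m + 1))) ×ˢ (motsOf (m + 1 - i))).image fun q => Mot.a q.1 q.2 := by
  rw [motsOf]
  simp

lemma card_filter_motsOf (P : Mot → Prop) (m : ℕ) :
    ((motsOf (m + 2)).filter P).card =
      ((motsOf (m + 1)).filter (fun t => P (.l t))).card +
      ∑ i ∈ Finset.range (m + 2),
        (((motsOf (min i (m + 1))) ×ˢ (motsOf (m + 1 - i))).filter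
          (fun q => P (.a q.1 q.2))).card := by
  rw [motsOf_step, Finset.filter_union, Finset.card_union_of_disjoint]
  · congr 1
    · rw [Finset.filter_image, Finset.card_image_of_injective _ l_inj]
    · rw [Finset.filter_biUnion, Finset.card_biUnion]
      · apply Finset.sum_congr rfl
        intro i _
        rw [Finset.filter_image, Finset.card_image_of_injective _ a_inj]
      · intro i hi j hj hij
        rw [Function.onFun, Finset.disjoint_left]
        rintro x hx hy
        simp only [Finset.mem_filter, Finset.mem_image, Finset.mem_product] at hx hy
        obtain ⟨⟨⟨p, q⟩, ⟨hp, -⟩, rfl⟩, -⟩ := hx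
        obtain ⟨⟨⟨p', q'⟩, ⟨hp', -⟩, h⟩, -⟩ := hy
        simp only [Mot.a.injEq] at h
        obtain ⟨rfl, rfl⟩ := h
        rw [mem_motsOf] at hp hp'
        simp only [Finset.mem_coe, Finset.mem_range] at hi hj
        rw [min_eq_left (by omega)] at hp
        rw [min_eq_left (by omega)] at hp'
        omega
  · rw [Finset.disjoint_left]
    rintro x hx hy
    simp only [Finset.mem_filter, Finset.mem_image, Finset.mem_biUnion,
      Finset.mem_product] at hx hy
    obtain ⟨⟨t, -, rfl⟩, -⟩ := hx
    obtain ⟨⟨i, -, ⟨p, q⟩, -, h⟩, -⟩ := hy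
    simp at h

lemma sum_filter_antidiagonal (f : ℕ → ℕ) (hf : f 0 = 0) (m : ℕ) :
    ∑ p ∈ (Finset.HasAntidiagonal.antidiagonal m).filter (fun p => 1 ≤ p.1 ∧ 1 ≤ p.2), f p.1 * f p.2
      = ∑ i ∈ Finset.range (m + 1), f i * f (m - i) := by
  rw [Finset.sum_filter, Finset.Nat.sum_antidiagonal_eq_sum_range_succ_mk]
  apply Finset.sum_congr rfl
  intro i hi
  simp only [Finset.mem_range] at hi
  split_ifs with h
  · rfl
  · have : i = 0 ∨ m - i = 0 := by omega
    rcases this with h0 | h0 <;> rw [h0] <;> simp [hf]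

lemma conv_term (P : Mot → Prop) (i j : ℕ) :
    (((motsOf i) ×ˢ (motsOf j)).filter (fun q : Mot × Mot => P q.1 ∧ P q.2)).card =
      ((motsOf i).filter P).card * ((motsOf j).filter P).card := by
  rw [Finset.filter_product, Finset.card_product]

theorem stmt8 :
    u 0 = 0 ∧ u 1 = 0 ∧
    (∀ n : ℕ, 2 ≤ n →
      u n = b (n - 1) +
        ∑ p ∈ (Finset.HasAntidiagonal.antidiagonal (n - 1)).filter (fun p => 1 ≤ p.1 ∧ 1 ≤ p.2),
          u p.1 * u p.2) ∧
    b 1 = 1 ∧ b 0 = 0 ∧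
    (∀ n : ℕ, 2 ≤ n →
      b n =
        ∑ p ∈ (Finset.HasAntidiagonal.antidiagonal (n - 1)).filter (fun p => 1 ≤ p.1 ∧ 1 ≤ p.2),
          b p.1 * b p.2) := by
  refine ⟨u_zero, u_one, ?_, b_one, b_zero, ?_⟩
  · intro n hn
    obtain ⟨m, rfl⟩ : ∃ m, n = m + 2 := ⟨n - 2, by omega⟩
    have key : u (m + 2) = b (m + 1) +
        ∑ i ∈ Finset.range (m + 2), u i * u (m + 1 - i) := by
      rw [u_eq, card_filter_motsOf]
      congr 1
      · rw [b_eq]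
        congr 1
        exact Finset.filter_congr (fun t _ => by rw [Mot.uc_l_iff])
      · apply Finset.sum_congr rfl
        intro i hi
        simp only [Finset.mem_range] at hi
        rw [min_eq_left (by omega)]
        rw [Finset.filter_congr (fun q _ => by rw [Mot.uc_a_iff]), conv_term,
          ← u_eq, ← u_eq]
    rw [key, sum_filter_antidiagonal u u_zero]
    simp
  · intro n hn
    obtain ⟨m, rfl⟩ : ∃ m, n = m + 2 := ⟨n - 2, by omega⟩
    have key : b (m + 2) = ∑ i ∈ Finset.range (m + 2), b i * b (m + 1 - i) := by
      rw [b_eq, card_filter_motsOf]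
      have h1 : ((motsOf (m + 1)).filter (fun t => Mot.LFree (.l t))).card = 0 := by
        rw [Finset.card_eq_zero, Finset.filter_eq_empty_iff]; intro t _; simp [Mot.LFree]
      rw [h1, zero_add]
      apply Finset.sum_congr rfl
      intro i hi
      simp only [Finset.mem_range] at hi
      rw [min_eq_left (by omega)]
      rw [b_eq, b_eq, ← conv_term]
      congr 1
      exact Finset.filter_congr fun q _ => Iff.rfl
    rw [key, sum_filter_antidiagonal b b_zero]
    simp
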